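/- arXiv:1907.06325 — 2 statements merged into one kernel-verified Lean document; each statement's English description precedes it below -/
import Mathlib

section
/- Let X = orbit closure of x with x not eventually periodic to the right, suppose c_X(n_k) < 2g·n_k and X has exactly C right-special words of length n_k for each term of a strictly increasing sequence (n_k). Then every word of X of length (2g+1)n_k contains at least one right-special word of length n_k, and every generic measure of X equals a weak limit of empirical measures (1/n_k)Σ_{j=0}^{n_k−1} δ_{σ^j y_k} along points y_k beginning with one of the C right-special words of length n_k; in particular X has at most C generic measures. -/
open Filter Topology MeasureTheory

variable {A : Type*} {B : Type*}

/-- The shift by `m` on bi-infinite sequences. -/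
def shiftBy (m : ℤ) (x : ℤ → A) : ℤ → A := fun i => x (i + m)

/-- The orbit closure of a point. -/
def orbitClosure [TopologicalSpace A] (x : ℤ → A) : Set (ℤ → A) :=
  closure {y | ∃ m : ℤ, y = shiftBy m x}

/-- A set of sequences invariant under all shifts. -/
def ShiftInvariant (X : Set (ℤ → A)) : Prop := ∀ m : ℤ, ∀ y ∈ X, shiftBy m y ∈ X

/-- A subshift: closed and shift-invariant. -/
def IsSubshift [TopologicalSpace A] (X : Set (ℤ → A)) : Prop :=
  IsClosed X ∧ ShiftInvariant X

/-- The word `w` occurs in `x` at position `i`. -/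
def occursAt (x : ℤ → A) (w : List A) (i : ℤ) : Prop :=
  ∀ k : Fin w.length, x (i + (k.val : ℤ)) = w.get k

/-- The word `w` occurs somewhere in some point of `X`. -/
def WordIn (X : Set (ℤ → A)) (w : List A) : Prop :=
  ∃ x ∈ X, ∃ i : ℤ, occursAt x w i

/-- The language of `X` in length `n`. -/
def langOf (X : Set (ℤ → A)) (n : ℕ) : Set (List A) :=
  {w | w.length = n ∧ WordIn X w}

/-- The complexity function of `X`. -/
noncomputable def complexity (X : Set (ℤ → A)) (n : ℕ) : ℕ := (langOf X n).ncard

/-- `w` is right-special in `X`. -/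
def RightSpecial (X : Set (ℤ → A)) (w : List A) : Prop :=
  ∃ a b : A, a ≠ b ∧ WordIn X (w ++ [a]) ∧ WordIn X (w ++ [b])

/-- `w` is left-special in `X`. -/
def LeftSpecial (X : Set (ℤ → A)) (w : List A) : Prop :=
  ∃ a b : A, a ≠ b ∧ WordIn X (a :: w) ∧ WordIn X (b :: w)

/-- The set of right-special words of length `n`. -/
def RS (X : Set (ℤ → A)) (n : ℕ) : Set (List A) :=
  {w | w.length = n ∧ RightSpecial X w}

/-- The length-`ℓ` word of `x` starting at position `i`. -/
def wordAt (x : ℤ → A) (i : ℤ) (ℓ : ℕ) : List A :=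
  List.ofFn (fun t : Fin ℓ => x (i + (t.val : ℤ)))

/-- `x` is a recurrent point: every word in it occurs infinitely often. -/
def RecurrentPt (x : ℤ → A) : Prop :=
  ∀ n : ℕ, ∀ i N : ℤ, ∃ j : ℤ, N ≤ j ∧ ∀ k : ℕ, k < n → x (j + k) = x (i + k)

/-- `x` is eventually periodic to the right. -/
def EventuallyPeriodicRight (x : ℤ → A) : Prop :=
  ∃ p : ℤ, 0 < p ∧ ∃ N : ℤ, ∀ i : ℤ, N < i → x (i + p) = x i

/-- `x` is eventually periodic to the left. -/
def EventuallyPeriodicLeft (x : ℤ → A) : Prop :=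
  ∃ p : ℤ, 0 < p ∧ ∃ N : ℤ, ∀ i : ℤ, i < N → x (i - p) = x i

/-- `M` is a minimal subsystem of `X`. -/
def MinimalSubsystem [TopologicalSpace A] (X M : Set (ℤ → A)) : Prop :=
  M ⊆ X ∧ M.Nonempty ∧ IsClosed M ∧ ShiftInvariant M ∧
    ∀ M' ⊆ M, M'.Nonempty → IsClosed M' → ShiftInvariant M' → M' = M

/-- `x` is a generic point for the measure `μ`. -/
def GenericFor [TopologicalSpace A] [MeasurableSpace A] (x : ℤ → A)
    (μ : Measure (ℤ → A)) : Prop :=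
  ∀ f : (ℤ → A) → ℝ, Continuous f →
    Tendsto (fun N : ℕ => (∑ i ∈ Finset.range N, f (shiftBy i x)) / (N : ℝ)) atTop
      (𝓝 (∫ y, f y ∂μ))

/-- `μ` is a generic measure for `X`. -/
def GenericMeasure [TopologicalSpace A] [MeasurableSpace A] (X : Set (ℤ → A))
    (μ : Measure (ℤ → A)) : Prop :=
  ∃ x ∈ X, GenericFor x μ

lemma shiftBy_shiftBy (a b : ℤ) (x : ℤ → A) : shiftBy a (shiftBy b x) = shiftBy (b + a) x := by
  funext i; simp only [shiftBy]; congr 1; ring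

lemma shiftBy_zero (x : ℤ → A) : shiftBy 0 x = x := by
  funext i; simp [shiftBy]

lemma mem_orbitClosure_self [TopologicalSpace A] (x : ℤ → A) : x ∈ orbitClosure x :=
  subset_closure ⟨0, (shiftBy_zero x).symm⟩

lemma continuous_shiftBy [TopologicalSpace A] (m : ℤ) :
    Continuous (shiftBy m : (ℤ → A) → (ℤ → A)) :=
  continuous_pi fun i => continuous_apply (i + m)

lemma shiftInvariant_orbitClosure [TopologicalSpace A] (x : ℤ → A) :
    ShiftInvariant (orbitClosure x) := by
  intro m y hy
  have h1 : shiftBy m y ∈ shiftBy m '' closure {y | ∃ k : ℤ, y = shiftBy k x} :=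
    ⟨y, hy, rfl⟩
  have h2 := image_closure_subset_closure_image (s := {y | ∃ k : ℤ, y = shiftBy k x})
    (continuous_shiftBy (A := A) m)
  have h3 : shiftBy m '' {y | ∃ k : ℤ, y = shiftBy k x} ⊆ {y | ∃ k : ℤ, y = shiftBy k x} := by
    rintro - ⟨z, ⟨k, rfl⟩, rfl⟩
    exact ⟨k + m, shiftBy_shiftBy m k x⟩
  exact closure_mono h3 (h2 h1)

lemma wordAt_length (x : ℤ → A) (i : ℤ) (n : ℕ) : (wordAt x i n).length = n :=
  List.length_ofFn

lemma occursAt_wordAt (x : ℤ → A) (i : ℤ) (n : ℕ) : occursAt x (wordAt x i n) i := by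
  intro k
  rw [List.get_eq_getElem]; simp [wordAt]

lemma occursAt_shift (m : ℤ) (x : ℤ → A) (w : List A) (i : ℤ) :
    occursAt (shiftBy m x) w i ↔ occursAt x w (i + m) := by
  unfold occursAt shiftBy
  constructor <;> intro h k <;> have := h k
  · rw [← this]; congr 1; ring
  · rw [← this]; congr 1; ring

lemma wordAt_eq_iff (x : ℤ → A) (a b : ℤ) (n : ℕ) :
    wordAt x a n = wordAt x b n ↔ ∀ t : Fin n, x (a + t.val) = x (b + t.val) := by
  rw [wordAt, wordAt, List.ofFn_inj, funext_iff]

lemma wordIn_iff [TopologicalSpace A] [DiscreteTopology A] (x : ℤ → A) (w : List A) :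
    WordIn (orbitClosure x) w ↔ ∃ j : ℤ, occursAt x w j := by
  constructor
  · rintro ⟨y, hy, i, hocc⟩
    have hU : IsOpen {z : ℤ → A | occursAt z w i} := by
      have : {z : ℤ → A | occursAt z w i}
          = ⋂ k : Fin w.length, (fun z : ℤ → A => z (i + (k.val : ℤ))) ⁻¹' {w.get k} := by
        ext z; simp [occursAt, Set.mem_iInter]
      rw [this]
      exact isOpen_iInter_of_finite fun k =>
        (continuous_apply (i + (k.val : ℤ))).isOpen_preimage _ (isOpen_discrete _)
    have hne := mem_closure_iff.mp hy _ hU hocc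
    obtain ⟨z, hz1, m, rfl⟩ := hne
    exact ⟨i + m, (occursAt_shift m x w i).mp hz1⟩
  · rintro ⟨j, hj⟩
    exact ⟨x, mem_orbitClosure_self x, j, hj⟩

lemma drop_take_eq_wordAt (x : ℤ → A) (w : List A) (q : ℤ) (h : occursAt x w q)
    (i n : ℕ) (hin : i + n ≤ w.length) : (w.drop i).take n = wordAt x (q + (i : ℤ)) n := by
  apply List.ext_getElem
  · simp [wordAt]; omega
  · intro t h1 h2
    have hlt : i + t < w.length := by simp at h1; omega
    have := h ⟨i + t, hlt⟩
    simp only [List.getElem_take, List.getElem_drop, wordAt, List.getElem_ofFn]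
    rw [List.get_eq_getElem] at this
    rw [← this]
    congr 1
    push_cast
    ring

lemma finite_of_length_eq [Fintype A] (n : ℕ) (s : Set (List A)) (hs : ∀ w ∈ s, w.length = n) :
    s.Finite := by
  apply Set.Finite.subset (Set.finite_range (fun f : Fin n → A => List.ofFn f))
  intro w hw
  refine ⟨fun t => w[(t : ℕ)]'(by rw [hs w hw]; exact t.isLt), ?_⟩
  apply List.ext_getElem
  · simp [hs w hw]
  · intro t h1 h2
    simp

lemma occursAt_append_right (x : ℤ → A) (v : List A) (p : ℤ) (h : occursAt x v p) :
    occursAt x (v ++ [x (p + v.length)]) p := by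
  intro k
  rcases lt_or_ge (k : ℕ) v.length with hk | hk
  · have := h ⟨k, hk⟩
    rw [List.get_eq_getElem] at this ⊢
    simpa [List.getElem_append, hk] using this
  · have hk' : (k : ℕ) = v.length := by
      have := k.isLt; simp at this; omega
    rw [List.get_eq_getElem]
    have : (v ++ [x (p + v.length)])[(k:ℕ)]'(k.isLt) = x (p + v.length) := by
      simp [List.getElem_append, hk']
    rw [this, hk']

lemma next_letter_eq {X : Set (ℤ → A)} {x : ℤ → A} (hxX : x ∈ X) {v : List A} {n : ℕ}
    (hlen : v.length = n) (hv : ¬ RightSpecial X v) {p₁ p₂ : ℤ}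
    (h1 : occursAt x v p₁) (h2 : occursAt x v p₂) : x (p₁ + n) = x (p₂ + n) := by
  by_contra hne
  exact hv ⟨x (p₁ + n), x (p₂ + n), hne,
    ⟨x, hxX, p₁, by rw [← hlen]; exact occursAt_append_right x v p₁ h1⟩,
    ⟨x, hxX, p₂, by rw [← hlen]; exact occursAt_append_right x v p₂ h2⟩⟩

lemma core_bullet1 [Fintype A] [TopologicalSpace A] [DiscreteTopology A]
    (x : ℤ → A) (hnp : ¬ EventuallyPeriodicRight x)
    (g n : ℕ) (hcomp : complexity (orbitClosure x) n < 2 * g * n)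
    (w : List A) (hlen : w.length = (2 * g + 1) * n)
    (hw : WordIn (orbitClosure x) w) :
    ∃ i : ℕ, i + n ≤ w.length ∧ (w.drop i).take n ∈ RS (orbitClosure x) n := by
  set X := orbitClosure x with hXdef
  by_contra hcon
  push_neg at hcon
  obtain ⟨q, hq⟩ := (wordIn_iff x w).mp hw
  have H' : ∀ i : ℕ, i + n ≤ (2*g+1)*n → ¬ RightSpecial X (wordAt x (q + (i:ℤ)) n) := by
    intro i hi hrs
    have h1 : i + n ≤ w.length := by rw [hlen]; exact hi
    have h2 := hcon i h1
    rw [drop_take_eq_wordAt x w q hq i n h1] at h2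
    exact h2 ⟨wordAt_length x _ n, hrs⟩
  have main : ∀ i j : ℕ, i < j → j ≤ 2*g*n →
      wordAt x (q + (i:ℤ)) n = wordAt x (q + (j:ℤ)) n → False := by
    intro i j hij hj hweq
    set d : ℤ := (j : ℤ) - (i : ℤ) with hd
    have hd0 : 0 < d := by omega
    have Q : ∀ m : ℕ, x (q + (j:ℤ) + (m:ℤ)) = x (q + (i:ℤ) + (m:ℤ)) := by
      intro m
      induction m using Nat.strong_induction_on with
      | _ m IH =>
      rcases lt_or_ge m n with hm | hm
      · exact ((wordAt_eq_iff x (q + (i:ℤ)) (q + (j:ℤ)) n).mp hweq ⟨m, hm⟩).symm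
      · have step : ∀ s : ℤ, (j:ℤ) ≤ s → s + (n:ℤ) ≤ (j:ℤ) + (m:ℤ) →
            wordAt x (q + s) n = wordAt x (q + s - d) n := by
          intro s hs1 hs2
          rw [wordAt_eq_iff]
          intro t
          have ht := t.isLt
          have h0 : (0:ℤ) ≤ s + (t:ℤ) - (j:ℤ) := by omega
          set m' : ℕ := (s + (t:ℤ) - (j:ℤ)).toNat with hm'def
          have hm'' : (m' : ℤ) = s + (t:ℤ) - (j:ℤ) := Int.toNat_of_nonneg h0
          have hlt : m' < m := by omega
          have hIH := IH m' hlt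
          have e1 : q + (j:ℤ) + (m':ℤ) = q + s + (t:ℤ) := by rw [hm'']; ring
          have e2 : q + (i:ℤ) + (m':ℤ) = q + s - d + (t:ℤ) := by rw [hm'', hd]; ring
          rw [e1, e2] at hIH
          exact hIH
        set s₀ : ℤ := (j:ℤ) + (m:ℤ) - (n:ℤ) with hs₀
        have chain : ∀ e : ℕ, (i:ℤ) + (e:ℤ) * d ≤ s₀ →
            wordAt x (q + s₀) n = wordAt x (q + (s₀ - (e:ℤ) * d)) n := by
          intro e
          induction e with
          | zero => intro _; norm_num
          | succ e IHe =>
            intro he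
            have he' : (i:ℤ) + (e:ℤ) * d ≤ s₀ := by
              have : ((e:ℤ)+1) * d = (e:ℤ)*d + d := by ring
              push_cast at he
              omega
            have h1 := IHe he'
            have hs1 : (j:ℤ) ≤ s₀ - (e:ℤ) * d := by
              push_cast at he
              have hx : ((e:ℤ)+1)*d = (e:ℤ)*d + d := by ring
              omega
            have hs2 : (s₀ - (e:ℤ)*d) + (n:ℤ) ≤ (j:ℤ) + (m:ℤ) := by
              have he2 : (0:ℤ) ≤ (e:ℤ) * d := by positivity
              omega
            have h2 := step (s₀ - (e:ℤ)*d) hs1 hs2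
            rw [h1, h2]
            congr 1
            push_cast
            ring
        have hDpos : (0:ℤ) ≤ s₀ - (i:ℤ) := by omega
        set e : ℕ := ((s₀ - (i:ℤ)) / d).toNat with hedef
        have hednn : (0:ℤ) ≤ (s₀ - (i:ℤ)) / d := Int.ediv_nonneg hDpos (le_of_lt hd0)
        have he' : (e : ℤ) = (s₀ - (i:ℤ)) / d := Int.toNat_of_nonneg hednn
        have hmod := Int.emod_emod_of_dvd
        have hkey : s₀ - (i:ℤ) - ((s₀ - (i:ℤ))/d) * d = (s₀ - (i:ℤ)) % d := by
          rw [Int.emod_def]; ring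
        have hmod0 : (0:ℤ) ≤ (s₀ - (i:ℤ)) % d := Int.emod_nonneg _ (ne_of_gt hd0)
        have hmodlt : (s₀ - (i:ℤ)) % d < d := Int.emod_lt_of_pos _ hd0
        set r : ℤ := s₀ - (e:ℤ) * d with hrdef
        have hri : (i:ℤ) ≤ r := by rw [hrdef, he']; omega
        have hrj : r < (j:ℤ) := by rw [hrdef, he']; omega
        have hchain := chain e (by rw [he']; omega)
        have hstep := step s₀ (by omega) (by omega)
        -- non right special at r
        have hr0 : (0:ℤ) ≤ r := by omega
        have hrnat : ((r.toNat : ℕ) : ℤ) = r := Int.toNat_of_nonneg hr0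
        have hmul : (2*g+1)*n = 2*g*n + n := by ring
        have hrsH : ¬ RightSpecial X (wordAt x (q + r) n) := by
          have := H' r.toNat (by omega)
          rwa [hrnat] at this
        have hocc1 : occursAt x (wordAt x (q + r) n) (q + s₀) := by
          rw [← hrdef] at hchain
          rw [← hchain]; exact occursAt_wordAt x (q + s₀) n
        have hocc2 : occursAt x (wordAt x (q + r) n) (q + s₀ - d) := by
          rw [← hrdef] at hchain
          have : wordAt x (q + s₀ - d) n = wordAt x (q + r) n := by
            rw [← hchain, ← hstep]
          rw [← this]; exact occursAt_wordAt x (q + s₀ - d) n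
        have hfin := next_letter_eq (mem_orbitClosure_self x) (wordAt_length x (q+r) n)
          hrsH hocc1 hocc2
        have e3 : q + s₀ + (n:ℤ) = q + (j:ℤ) + (m:ℤ) := by omega
        have e4 : q + s₀ - d + (n:ℤ) = q + (i:ℤ) + (m:ℤ) := by omega
        rw [e3, e4] at hfin
        exact hfin
    -- contradiction with aperiodicity
    apply hnp
    refine ⟨d, hd0, q + (j:ℤ), ?_⟩
    intro i' hi'
    have h0 : (0:ℤ) ≤ i' + d - (q + (j:ℤ)) := by omega
    set m : ℕ := (i' + d - (q + (j:ℤ))).toNat with hmdef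
    have hm : (m:ℤ) = i' + d - (q + (j:ℤ)) := Int.toNat_of_nonneg h0
    have := Q m
    have e1 : q + (j:ℤ) + (m:ℤ) = i' + d := by omega
    have e2 : q + (i:ℤ) + (m:ℤ) = i' := by omega
    rw [e1, e2] at this
    exact this
  -- pigeonhole
  have hfin : (langOf X n).Finite := finite_of_length_eq n _ (fun w hw => hw.1)
  have hmaps : ∀ i ∈ Finset.range (2*g*n + 1), wordAt x (q + (i:ℤ)) n ∈ hfin.toFinset := by
    intro i _
    rw [Set.Finite.mem_toFinset]
    exact ⟨wordAt_length _ _ _, ⟨x, mem_orbitClosure_self x, q + (i:ℤ), occursAt_wordAt _ _ _⟩⟩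
  have hcard : hfin.toFinset.card < (Finset.range (2*g*n+1)).card := by
    rw [Finset.card_range]
    have h1 : (langOf X n).ncard = hfin.toFinset.card := Set.ncard_eq_toFinset_card _ hfin
    have h2 : complexity X n < 2*g*n := hcomp
    rw [complexity] at h2
    omega
  obtain ⟨a, ha, b, hb, hab, heq⟩ :=
    Finset.exists_ne_map_eq_of_card_lt_of_maps_to hcard hmaps
  rw [Finset.mem_range] at ha hb
  rcases Nat.lt_or_ge a b with h | h
  · exact main a b h (by omega) heq
  · have h' : b < a := by omega
    exact main b a h' (by omega) heq.symm

lemma block_tendsto (F : ℕ → ℝ) (I : ℝ)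
    (h : Tendsto (fun N => F N / N) atTop (𝓝 I)) (a b : ℕ → ℕ) (c : ℕ)
    (hab : ∀ m, a m ≤ c * b m) (hb : Tendsto b atTop atTop) :
    Tendsto (fun m => (F (a m + b m) - F (a m)) / (b m)) atTop (𝓝 I) := by
  rw [Metric.tendsto_atTop] at h ⊢
  intro δ hδ
  have hc1 : (0:ℝ) < 2*(c:ℝ)+1 := by positivity
  set ε : ℝ := δ / (2 * (2*(c:ℝ)+1) + 2) with hεdef
  have hεpos : 0 < ε := by positivity
  obtain ⟨K, hK⟩ := h ε hεpos
  set K' : ℕ := max K 1 with hK'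
  have hG : ∀ N : ℕ, K' ≤ N → |F N - N * I| ≤ ε * N := by
    intro N hN
    have h1 := hK N (le_trans (le_max_left _ _) hN)
    rw [Real.dist_eq] at h1
    have hN1 : (1:ℕ) ≤ N := le_trans (le_max_right _ _) hN
    have hNpos : (0:ℝ) < N := by exact_mod_cast hN1
    have e : F N - N*I = (F N / N - I) * N := by field_simp
    rw [e, abs_mul, abs_of_pos hNpos]
    exact mul_le_mul_of_nonneg_right (le_of_lt h1) (le_of_lt hNpos)
  set B : ℝ := ∑ N ∈ Finset.range K', |F N - N * I| with hBdef
  have hBnn : 0 ≤ B := Finset.sum_nonneg fun _ _ => abs_nonneg _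
  have hGall : ∀ N : ℕ, |F N - N*I| ≤ ε * N + B := by
    intro N
    rcases lt_or_ge N K' with hN | hN
    · have h1 : |F N - N*I| ≤ B :=
        Finset.single_le_sum (f := fun N => |F N - N*I|) (fun _ _ => abs_nonneg _)
          (Finset.mem_range.mpr hN)
      have h2 : (0:ℝ) ≤ ε * N := by positivity
      linarith
    · have := hG N hN
      linarith
  obtain ⟨M, hM⟩ := Filter.eventually_atTop.mp
    (hb.eventually_ge_atTop (max K' (⌈4*B/δ⌉₊ + 1)))
  refine ⟨M, fun m hm => ?_⟩
  have hbm := hM m hm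
  have hbK : K' ≤ b m := le_trans (le_max_left _ _) hbm
  have hb1 : 1 ≤ b m := le_trans (le_max_right _ _) hbK
  have hbpos : (0:ℝ) < b m := by exact_mod_cast hb1
  have hbig : (4*B/δ) < (b m : ℝ) := by
    have h1 : (⌈4*B/δ⌉₊ + 1 : ℕ) ≤ b m := le_trans (le_max_right _ _) hbm
    have h2 : (4*B/δ : ℝ) ≤ (⌈4*B/δ⌉₊ : ℝ) := Nat.le_ceil _
    have h3 : ((⌈4*B/δ⌉₊ + 1 : ℕ) : ℝ) ≤ (b m : ℝ) := by exact_mod_cast h1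
    push_cast at h3
    linarith
  rw [Real.dist_eq]
  have hG1 := hGall (a m + b m)
  have hG2 := hGall (a m)
  have hab' : (a m : ℝ) ≤ (c:ℝ) * (b m) := by exact_mod_cast hab m
  have e : (F (a m + b m) - F (a m)) / (b m) - I
      = ((F (a m + b m) - ((a m + b m : ℕ):ℝ)*I) - (F (a m) - (a m : ℝ)*I)) / (b m) := by
    push_cast
    field_simp
    ring
  have hcast : ((a m + b m : ℕ):ℝ) = (a m : ℝ) + (b m : ℝ) := by push_cast; ring
  rw [e, abs_div, abs_of_pos hbpos, hcast]
  rw [hcast] at hG1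
  have hnum : |(F (a m + b m) - ((a m:ℝ) + (b m:ℝ))*I) - (F (a m) - (a m:ℝ)*I)|
      ≤ ε * (2*(c:ℝ)+1) * (b m) + 2*B := by
    have htri : |(F (a m + b m) - ((a m:ℝ) + (b m:ℝ))*I) - (F (a m) - (a m:ℝ)*I)|
        ≤ |F (a m + b m) - ((a m:ℝ) + (b m:ℝ))*I| + |F (a m) - (a m:ℝ)*I| := abs_sub _ _
    nlinarith [hεpos.le]
  have hfrac : |(F (a m + b m) - ((a m:ℝ) + (b m:ℝ))*I) - (F (a m) - (a m:ℝ)*I)| / (b m)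
      ≤ ε * (2*(c:ℝ)+1) + 2*B / (b m) := by
    rw [div_le_iff₀ hbpos]
    calc _ ≤ ε * (2*(c:ℝ)+1) * (b m) + 2*B := hnum
    _ = (ε * (2*(c:ℝ)+1) + 2*B/(b m)) * (b m) := by field_simp
  have h1 : ε * (2*(c:ℝ)+1) < δ/2 := by
    rw [hεdef]
    rw [div_mul_eq_mul_div, div_lt_iff₀ (by positivity)]
    nlinarith
  have h2 : 2*B/(b m) < δ/2 := by
    rw [div_lt_iff₀ hbpos]
    rw [div_lt_iff₀ hδ] at hbig
    nlinarith
  calc _ ≤ ε * (2*(c:ℝ)+1) + 2*B / (b m) := hfrac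
  _ < δ/2 + δ/2 := by linarith
  _ = δ := by ring

lemma wordAt_shift (m : ℤ) (z : ℤ → A) (n : ℕ) :
    wordAt (shiftBy m z) 0 n = wordAt z m n := by
  unfold wordAt shiftBy
  apply congrArg List.ofFn
  funext t
  congr 1
  ring

lemma key_abs_bound [Fintype A] [TopologicalSpace A] [DiscreteTopology A] [Nonempty A]
    (f : (ℤ → A) → ℝ) (hf : Continuous f) : ∃ Cf : ℝ, 0 ≤ Cf ∧ ∀ u, |f u| ≤ Cf := by
  obtain ⟨u₀, -, hu₀⟩ := isCompact_univ.exists_isMaxOn (Set.univ_nonempty)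
    ((continuous_abs.comp hf).continuousOn)
  exact ⟨|f u₀|, abs_nonneg _, fun u => hu₀ (Set.mem_univ u)⟩

lemma key_unif [Fintype A] [TopologicalSpace A] [DiscreteTopology A]
    (f : (ℤ → A) → ℝ) (hf : Continuous f) (ε : ℝ) (hε : 0 < ε) :
    ∃ M : ℕ, ∀ u v : ℤ → A, (∀ c : ℤ, c.natAbs ≤ M → u c = v c) → |f u - f v| ≤ ε := by
  -- for each u, a finite set of coordinates controlling f within ε/2
  have hcyl : ∀ u : ℤ → A, ∃ J : Finset ℤ,
      ∀ v : ℤ → A, (∀ c ∈ J, v c = u c) → |f v - f u| < ε/2 := by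
    intro u
    have hO : f ⁻¹' Metric.ball (f u) (ε/2) ∈ 𝓝 u :=
      hf.continuousAt.preimage_mem_nhds (Metric.ball_mem_nhds _ (by positivity))
    rw [nhds_pi, Filter.mem_pi] at hO
    obtain ⟨I, hIfin, t, ht, hsub⟩ := hO
    refine ⟨hIfin.toFinset, fun v hv => ?_⟩
    have hvmem : v ∈ Set.pi I t := by
      intro c hc
      rw [hv c (hIfin.mem_toFinset.mpr hc)]
      exact mem_of_mem_nhds (ht c)
    have := hsub hvmem
    rw [Set.mem_preimage, Metric.mem_ball, Real.dist_eq] at this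
    exact this
  choose J hJ using hcyl
  -- cylinders around u form an open cover
  have hcover : (Set.univ : Set (ℤ → A)) ⊆
      ⋃ u : ℤ → A, {v : ℤ → A | ∀ c ∈ J u, v c = u c} := by
    intro u _
    exact Set.mem_iUnion.mpr ⟨u, fun c _ => rfl⟩
  have hopen : ∀ u : ℤ → A, IsOpen {v : ℤ → A | ∀ c ∈ J u, v c = u c} := by
    intro u
    have : {v : ℤ → A | ∀ c ∈ J u, v c = u c}
        = ⋂ c ∈ (J u : Finset ℤ), (fun v : ℤ → A => v c) ⁻¹' {u c} := by
      ext v; simp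
    rw [this]
    exact isOpen_biInter_finset fun c _ =>
      (continuous_apply c).isOpen_preimage _ (isOpen_discrete _)
  obtain ⟨T, hT⟩ := isCompact_univ.elim_finite_subcover _ hopen hcover
  set M : ℕ := T.sup (fun u => (J u).sup Int.natAbs) with hM
  refine ⟨M, fun u v huv => ?_⟩
  obtain ⟨w, hwT, hw⟩ : ∃ w ∈ T, ∀ c ∈ J w, u c = w c := by
    have := hT (Set.mem_univ u)
    simp only [Set.mem_iUnion, Finset.mem_coe] at this
    obtain ⟨w, hwT, hw⟩ := this
    exact ⟨w, hwT, hw⟩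
  have hvw : ∀ c ∈ J w, v c = w c := by
    intro c hc
    have hc1 : c.natAbs ≤ (J w).sup Int.natAbs := Finset.le_sup hc
    have hc2 : (J w).sup Int.natAbs ≤ M := Finset.le_sup (f := fun u => (J u).sup Int.natAbs) hwT
    rw [← huv c (le_trans hc1 hc2)]
    exact hw c hc
  have h1 := hJ w u hw
  have h2 := hJ w v hvw
  calc |f u - f v| ≤ |f u - f w| + |f w - f v| := abs_sub_le _ _ _
  _ ≤ ε/2 + ε/2 := by
      rw [abs_sub_comm (f w) (f v)]
      exact add_le_add h1.le h2.le
  _ = ε := by ring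


lemma avg_diff_tendsto [Fintype A] [TopologicalSpace A] [DiscreteTopology A] [Nonempty A]
    (f : (ℤ → A) → ℝ) (hf : Continuous f)
    (y₁ y₂ : ℕ → (ℤ → A)) (n : ℕ → ℕ) (l : Filter ℕ)
    (hl : ∀ᶠ k in l, ∀ c : ℤ, 0 ≤ c → c < (n k : ℤ) → y₁ k c = y₂ k c)
    (hn : Tendsto (fun k => n k) l atTop) :
    Tendsto (fun k => (∑ j ∈ Finset.range (n k), f (shiftBy j (y₁ k))) / (n k : ℝ)
      - (∑ j ∈ Finset.range (n k), f (shiftBy j (y₂ k))) / (n k : ℝ)) l (𝓝 0) := by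
  obtain ⟨Cf, hCf0, hCf⟩ := key_abs_bound f hf
  rw [Metric.tendsto_nhds]
  intro ε hε
  obtain ⟨M, hM⟩ := key_unif f hf (ε/2) (by positivity)
  have hbig : ∀ᶠ k in l, (n k : ℝ) > max 1 (8*(M:ℝ)*Cf/ε + 1) := by
    have : ∀ᶠ k in l, n k ≥ ⌈max 1 (8*(M:ℝ)*Cf/ε + 1)⌉₊ + 1 :=
      hn.eventually (eventually_ge_atTop _)
    filter_upwards [this] with k hk
    have h1 : (max 1 (8*(M:ℝ)*Cf/ε + 1)) ≤ (⌈max 1 (8*(M:ℝ)*Cf/ε + 1)⌉₊ : ℝ) := Nat.le_ceil _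
    have h2 : ((⌈max 1 (8*(M:ℝ)*Cf/ε + 1)⌉₊ + 1 : ℕ) : ℝ) ≤ (n k : ℝ) := by exact_mod_cast hk
    push_cast at h2
    linarith
  filter_upwards [hl, hbig] with k hag hnk
  have hn1 : (1:ℝ) < (n k : ℝ) := lt_of_le_of_lt (le_max_left _ _) hnk
  have hnpos : (0:ℝ) < (n k : ℝ) := by linarith
  rw [Real.dist_eq, sub_zero, div_sub_div_same]
  rw [← Finset.sum_sub_distrib]
  have hterm : ∀ j ∈ Finset.range (n k), |f (shiftBy j (y₁ k)) - f (shiftBy j (y₂ k))|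
      ≤ ε/2 + (if M ≤ j ∧ j + M < n k then 0 else 2*Cf) := by
    intro j hj
    by_cases hgood : M ≤ j ∧ j + M < n k
    · rw [if_pos hgood, add_zero]
      apply hM
      intro c hc
      show y₁ k (c + (j:ℤ)) = y₂ k (c + (j:ℤ))
      have hc1 : -(M:ℤ) ≤ c ∧ c ≤ (M:ℤ) := by
        constructor <;> [skip; skip] <;> omega
      apply hag
      · omega
      · omega
    · rw [if_neg hgood]
      have h1 := hCf (shiftBy j (y₁ k))
      have h2 := hCf (shiftBy j (y₂ k))
      have := abs_sub (f (shiftBy (j:ℤ) (y₁ k))) (f (shiftBy (j:ℤ) (y₂ k)))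
      have hε2 : (0:ℝ) ≤ ε/2 := by positivity
      linarith
  have hsum : |∑ j ∈ Finset.range (n k), (f (shiftBy j (y₁ k)) - f (shiftBy j (y₂ k)))|
      ≤ (n k : ℝ) * (ε/2) + (2*M) * (2*Cf) := by
    calc |∑ j ∈ Finset.range (n k), (f (shiftBy j (y₁ k)) - f (shiftBy j (y₂ k)))|
        ≤ ∑ j ∈ Finset.range (n k), |f (shiftBy j (y₁ k)) - f (shiftBy j (y₂ k))| :=
          Finset.abs_sum_le_sum_abs _ _
    _ ≤ ∑ j ∈ Finset.range (n k), (ε/2 + (if M ≤ j ∧ j + M < n k then 0 else 2*Cf)) :=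
          Finset.sum_le_sum hterm
    _ = (n k : ℝ) * (ε/2) + ∑ j ∈ Finset.range (n k),
          (if M ≤ j ∧ j + M < n k then 0 else 2*Cf) := by
        rw [Finset.sum_add_distrib, Finset.sum_const, Finset.card_range, nsmul_eq_mul]
    _ ≤ (n k : ℝ) * (ε/2) + (2*M) * (2*Cf) := by
        gcongr
        have : ∑ j ∈ Finset.range (n k), (if M ≤ j ∧ j + M < n k then (0:ℝ) else 2*Cf)
            = ∑ j ∈ (Finset.range (n k)).filter (fun j => ¬(M ≤ j ∧ j + M < n k)), 2*Cf := by
          rw [Finset.sum_filter]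
          apply Finset.sum_congr rfl
          intro j _
          by_cases h : M ≤ j ∧ j + M < n k <;> simp [h]
        rw [this, Finset.sum_const, nsmul_eq_mul]
        have hcard : ((Finset.range (n k)).filter (fun j => ¬(M ≤ j ∧ j + M < n k))).card
            ≤ 2*M := by
          have hsub : (Finset.range (n k)).filter (fun j => ¬(M ≤ j ∧ j + M < n k))
              ⊆ Finset.range M ∪ Finset.Ico (n k - M) (n k) := by
            intro j hj
            simp only [Finset.mem_filter, Finset.mem_range, Finset.mem_union,
              Finset.mem_Ico] at *
            omega
          calc _ ≤ (Finset.range M ∪ Finset.Ico (n k - M) (n k)).card :=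
                Finset.card_le_card hsub
          _ ≤ (Finset.range M).card + (Finset.Ico (n k - M) (n k)).card :=
                Finset.card_union_le _ _
          _ ≤ 2*M := by rw [Finset.card_range, Nat.card_Ico]; omega
        have h2Cf : (0:ℝ) ≤ 2*Cf := by linarith
        calc (((Finset.range (n k)).filter (fun j => ¬(M ≤ j ∧ j + M < n k))).card : ℝ) * (2*Cf)
            ≤ ((2*M : ℕ) : ℝ) * (2*Cf) := by
              apply mul_le_mul_of_nonneg_right _ h2Cf
              exact_mod_cast hcard
        _ = (2*(M:ℝ)) * (2*Cf) := by push_cast; ring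
  rw [abs_div, abs_of_pos hnpos, div_lt_iff₀ hnpos]
  have hfinal : (8*(M:ℝ)*Cf/ε + 1) < (n k : ℝ) := lt_of_le_of_lt (le_max_right _ _) hnk
  have h4 : 4*(M:ℝ)*Cf < (ε/2) * (n k : ℝ) := by
    have h5 : 8*(M:ℝ)*Cf/ε < (n k:ℝ) := by linarith
    rw [div_lt_iff₀ hε] at h5
    linarith
  calc |∑ j ∈ Finset.range (n k), (f (shiftBy j (y₁ k)) - f (shiftBy j (y₂ k)))|
      ≤ (n k : ℝ) * (ε/2) + (2*M) * (2*Cf) := hsum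
  _ < (n k : ℝ) * (ε/2) + (ε/2) * (n k : ℝ) := by nlinarith
  _ = ε * (n k : ℝ) := by ring

lemma generic_measure_univ_one [TopologicalSpace A] [MeasurableSpace A]
    {z : ℤ → A} {μ : Measure (ℤ → A)} (hz : GenericFor z μ) : μ Set.univ = 1 := by
  have h1 := hz (fun _ => 1) continuous_const
  have h2 : Tendsto (fun N : ℕ => (∑ _i ∈ Finset.range N, (1:ℝ)) / (N:ℝ)) atTop (𝓝 1) := by
    apply Tendsto.congr' _ tendsto_const_nhds
    filter_upwards [eventually_ge_atTop 1] with N hN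
    rw [Finset.sum_const, Finset.card_range]
    have : (N:ℝ) ≠ 0 := by positivity
    field_simp
    simp
  have h3 := tendsto_nhds_unique h1 h2
  rw [integral_const, smul_eq_mul, mul_one] at h3
  exact (ENNReal.toReal_eq_one_iff _).mp h3

lemma indicator_continuous_of_clopen [TopologicalSpace A] {E : Set (ℤ → A)} (hE : IsClopen E) :
    Continuous (E.indicator (fun _ => (1:ℝ))) := by
  classical
  apply IsLocallyConstant.continuous
  intro s
  have hrep : E.indicator (fun _ => (1:ℝ)) ⁻¹' s =
      (if (1:ℝ) ∈ s then E else ∅) ∪ (if (0:ℝ) ∈ s then Eᶜ else ∅) := by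
    ext v
    by_cases hv : v ∈ E <;> by_cases h1 : (1:ℝ) ∈ s <;> by_cases h0 : (0:ℝ) ∈ s <;>
      simp [Set.indicator_apply, hv, h1, h0]
  rw [hrep]
  apply IsOpen.union
  · split_ifs
    · exact hE.2
    · exact isOpen_empty
  · split_ifs
    · exact hE.1.isOpen_compl
    · exact isOpen_empty

lemma measure_ext_of_integrals [Fintype A] [TopologicalSpace A] [DiscreteTopology A]
    [MeasurableSpace A] {μ ν : Measure (ℤ → A)} (hμ : μ Set.univ = 1) (hν : ν Set.univ = 1)
    (h : ∀ f : (ℤ → A) → ℝ, Continuous f → ∫ y, f y ∂μ = ∫ y, f y ∂ν) : μ = ν := by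
  have hμf : IsFiniteMeasure μ := ⟨by rw [hμ]; exact ENNReal.one_lt_top⟩
  have hνf : IsFiniteMeasure ν := ⟨by rw [hν]; exact ENNReal.one_lt_top⟩
  have hgen : (MeasurableSpace.pi : MeasurableSpace (ℤ → A))
      = MeasurableSpace.generateFrom (measurableCylinders (fun _ : ℤ => A)) :=
    generateFrom_measurableCylinders.symm
  have hpi : IsPiSystem (measurableCylinders (fun _ : ℤ => A)) := isPiSystem_measurableCylinders
  have hsets : ∀ s ∈ measurableCylinders (fun _ : ℤ => A), μ s = ν s := ?_
  · exact ext_of_generate_finite (measurableCylinders (fun _ : ℤ => A)) hgen hpi hsets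
      (by rw [hμ, hν])
  intro s hs
  obtain ⟨J, S, hS, rfl⟩ := (mem_measurableCylinders _).mp hs
  have hmeas : MeasurableSet (cylinder J S) := MeasurableSet.cylinder (α := fun _ : ℤ => A) J hS
  have hclopen : IsClopen (cylinder (α := fun _ : ℤ => A) J S) := by
    have hcont : Continuous (J.restrict : (ℤ → A) → (J → A)) :=
      continuous_pi fun i => continuous_apply (i : ℤ)
    constructor
    · exact (isClosed_discrete S).preimage hcont
    · exact (isOpen_discrete S).preimage hcont
  have hind := h _ (indicator_continuous_of_clopen hclopen)
  rw [integral_indicator_const (1:ℝ) hmeas, integral_indicator_const (1:ℝ) hmeas,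
    smul_eq_mul, smul_eq_mul, mul_one, mul_one] at hind
  exact (ENNReal.toReal_eq_toReal_iff' (measure_ne_top μ _) (measure_ne_top ν _)).mp hind

lemma exists_good_windows [Fintype A] [TopologicalSpace A] [DiscreteTopology A] [MeasurableSpace A]
    (x : ℤ → A) (hnp : ¬ EventuallyPeriodicRight x)
    (g : ℕ) (n : ℕ → ℕ) (hn : StrictMono n)
    (hc : ∀ k, complexity (orbitClosure x) (n k) < 2 * g * n k)
    (z : ℤ → A) (hzX : z ∈ orbitClosure x)
    (μ : Measure (ℤ → A)) (hz : GenericFor z μ) :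
    ∃ y : ℕ → (ℤ → A), (∀ k, y k ∈ orbitClosure x ∧
        wordAt (y k) 0 (n k) ∈ RS (orbitClosure x) (n k)) ∧
      ∀ f : (ℤ → A) → ℝ, Continuous f →
        Tendsto (fun k => (∑ j ∈ Finset.range (n k), f (shiftBy j (y k))) / (n k : ℝ))
          atTop (𝓝 (∫ w, f w ∂μ)) := by
  have hsel : ∀ k, ∃ i : ℕ, i + n k ≤ (2*g+1) * (n k) ∧
      wordAt z ((i:ℤ)) (n k) ∈ RS (orbitClosure x) (n k) := by
    intro k
    have hw : WordIn (orbitClosure x) (wordAt z 0 ((2*g+1) * n k)) :=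
      ⟨z, hzX, 0, occursAt_wordAt _ _ _⟩
    obtain ⟨i, hi1, hi2⟩ := core_bullet1 x hnp g (n k) (hc k) _ (wordAt_length _ _ _) hw
    rw [wordAt_length] at hi1
    refine ⟨i, hi1, ?_⟩
    rw [drop_take_eq_wordAt z _ 0 (occursAt_wordAt z 0 _) i (n k)
      (by rw [wordAt_length]; exact hi1), zero_add] at hi2
    exact hi2
  choose q hq1 hq2 using hsel
  refine ⟨fun k => shiftBy (q k) z, fun k => ⟨?_, ?_⟩, ?_⟩
  · exact shiftInvariant_orbitClosure x _ _ hzX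
  · rw [wordAt_shift]
    exact hq2 k
  · intro f hf
    have hzf := hz f hf
    have heq : ∀ k, (∑ j ∈ Finset.range (n k), f (shiftBy j (shiftBy (q k) z)))
        = (∑ i ∈ Finset.range (q k + n k), f (shiftBy i z))
          - (∑ i ∈ Finset.range (q k), f (shiftBy i z)) := by
      intro k
      rw [Finset.sum_range_add]
      have : ∀ j ∈ Finset.range (n k),
          f (shiftBy ((q k + j : ℕ) : ℤ) z) = f (shiftBy (j:ℤ) (shiftBy ((q k : ℕ):ℤ) z)) := by
        intro j _
        rw [shiftBy_shiftBy]
        norm_cast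
      rw [Finset.sum_congr rfl this]
      ring
  -- apply block_tendsto
    have hab : ∀ k, q k ≤ (2*g) * n k := by
      intro k
      have := hq1 k
      have h2 : (2*g+1) * (n k) = 2*g*(n k) + n k := by ring
      omega
    have hb : Tendsto n atTop atTop := hn.tendsto_atTop
    have := block_tendsto (fun N => ∑ i ∈ Finset.range N, f (shiftBy i z)) (∫ w, f w ∂μ)
      hzf q n (2*g) hab hb
    apply Tendsto.congr _ this
    intro k
    rw [heq k]


lemma wordAt_zero_eq_pointwise {u v : ℤ → A} {n : ℕ} (h : wordAt u 0 n = wordAt v 0 n) :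
    ∀ c : ℤ, 0 ≤ c → c < (n : ℤ) → u c = v c := by
  intro c hc1 hc2
  rw [wordAt, wordAt, List.ofFn_inj] at h
  have hlt : c.toNat < n := by omega
  have := congrFun h ⟨c.toNat, hlt⟩
  simpa [Int.toNat_of_nonneg hc1] using this


theorem stmt18 [Fintype A] [TopologicalSpace A] [DiscreteTopology A] [MeasurableSpace A]
    (x : ℤ → A) (X : Set (ℤ → A)) (hX : X = orbitClosure x)
    (hnp : ¬ EventuallyPeriodicRight x)
    (g C : ℕ) (n : ℕ → ℕ) (hn : StrictMono n) (hn0 : ∀ k, 0 < n k)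
    (hc : ∀ k, complexity X (n k) < 2 * g * n k)
    (hC : ∀ k, (RS X (n k)).ncard = C) :
    (∀ k, ∀ w : List A, w.length = (2 * g + 1) * n k → WordIn X w →
      ∃ i : ℕ, i + n k ≤ w.length ∧ (w.drop i).take (n k) ∈ RS X (n k)) ∧
    (∀ μ : Measure (ℤ → A), GenericMeasure X μ →
      ∃ (φ : ℕ → ℕ) (y : ℕ → (ℤ → A)), StrictMono φ ∧
        (∀ m, y m ∈ X ∧ wordAt (y m) 0 (n (φ m)) ∈ RS X (n (φ m))) ∧
        ∀ f : (ℤ → A) → ℝ, Continuous f →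
          Tendsto (fun m => (∑ i ∈ Finset.range (n (φ m)), f (shiftBy i (y m))) /
              (n (φ m) : ℝ)) atTop (𝓝 (∫ z, f z ∂μ))) ∧
    (∀ μs : Fin (C + 1) → Measure (ℤ → A),
      (∀ t, GenericMeasure X (μs t)) → ¬ Function.Injective μs) := by
  subst hX
  refine ⟨fun k w hlen hw => core_bullet1 x hnp g (n k) (hc k) w hlen hw, ?_, ?_⟩
  · intro μ hμ
    obtain ⟨z, hzX, hz⟩ := hμ
    obtain ⟨y, hy1, hy2⟩ := exists_good_windows x hnp g n hn hc z hzX μ hz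
    exact ⟨id, y, strictMono_id, fun m => hy1 m, fun f hf => hy2 f hf⟩
  · intro μs hgen hinj
    haveI : Nonempty A := ⟨x 0⟩
    have hzex : ∀ t, ∃ z, z ∈ orbitClosure x ∧ GenericFor z (μs t) := fun t => hgen t
    choose z hzX hzG using hzex
    have hwin : ∀ t : Fin (C+1), ∃ y : ℕ → (ℤ → A), (∀ k, y k ∈ orbitClosure x ∧
        wordAt (y k) 0 (n k) ∈ RS (orbitClosure x) (n k)) ∧
      ∀ f : (ℤ → A) → ℝ, Continuous f →
        Tendsto (fun k => (∑ j ∈ Finset.range (n k), f (shiftBy j (y k))) / (n k : ℝ))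
          atTop (𝓝 (∫ w, f w ∂(μs t))) :=
      fun t => exists_good_windows x hnp g n hn hc (z t) (hzX t) (μs t) (hzG t)
    choose y hy1 hy2 using hwin
    have hRSfin : ∀ k, (RS (orbitClosure x) (n k)).Finite :=
      fun k => finite_of_length_eq (n k) _ (fun w hw => hw.1)
    have hpair : ∀ k, ∃ p : Fin (C+1) × Fin (C+1), p.1 ≠ p.2 ∧
        wordAt (y p.1 k) 0 (n k) = wordAt (y p.2 k) 0 (n k) := by
      intro k
      have hcard : (hRSfin k).toFinset.card < (Finset.univ : Finset (Fin (C+1))).card := by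
        rw [Finset.card_univ, Fintype.card_fin]
        have h1 : (RS (orbitClosure x) (n k)).ncard = (hRSfin k).toFinset.card :=
          Set.ncard_eq_toFinset_card _ (hRSfin k)
        have h2 := hC k
        omega
      have hmaps : ∀ t ∈ (Finset.univ : Finset (Fin (C+1))),
          wordAt (y t k) 0 (n k) ∈ (hRSfin k).toFinset := by
        intro t _
        rw [Set.Finite.mem_toFinset]
        exact (hy1 t k).2
      obtain ⟨t₁, -, t₂, -, hne, he⟩ :=
        Finset.exists_ne_map_eq_of_card_lt_of_maps_to hcard hmaps
      exact ⟨(t₁, t₂), hne, he⟩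
    choose P hP1 hP2 using hpair
    obtain ⟨p₀, hfib⟩ := Finite.exists_infinite_fiber P
    have hSinf : (P ⁻¹' {p₀}).Infinite := Set.infinite_coe_iff.mp hfib
    set l : Filter ℕ := atTop ⊓ Filter.principal (P ⁻¹' {p₀}) with hldef
    haveI hlneb : l.NeBot := Filter.frequently_mem_iff_neBot.mp
      (Nat.frequently_atTop_iff_infinite.mpr hSinf)
    obtain ⟨k₀, hk₀⟩ := hSinf.nonempty
    have hne12 : p₀.1 ≠ p₀.2 := by
      have h := hP1 k₀
      rw [Set.mem_preimage, Set.mem_singleton_iff] at hk₀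
      rwa [hk₀] at h
    have hint : ∀ f : (ℤ → A) → ℝ, Continuous f →
        ∫ w, f w ∂(μs p₀.1) = ∫ w, f w ∂(μs p₀.2) := by
      intro f hf
      have h1 : Tendsto (fun k => (∑ j ∈ Finset.range (n k), f (shiftBy j (y p₀.1 k))) / (n k : ℝ))
          l (𝓝 (∫ w, f w ∂(μs p₀.1))) := (hy2 p₀.1 f hf).mono_left inf_le_left
      have h2 : Tendsto (fun k => (∑ j ∈ Finset.range (n k), f (shiftBy j (y p₀.2 k))) / (n k : ℝ))
          l (𝓝 (∫ w, f w ∂(μs p₀.2))) := (hy2 p₀.2 f hf).mono_left inf_le_left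
      have hagree : ∀ᶠ k in l, ∀ c : ℤ, 0 ≤ c → c < (n k : ℤ) → y p₀.1 k c = y p₀.2 k c := by
        rw [hldef, Filter.eventually_inf_principal]
        apply Filter.Eventually.of_forall
        intro k hk
        rw [Set.mem_preimage, Set.mem_singleton_iff] at hk
        have hw := hP2 k
        rw [hk] at hw
        exact wordAt_zero_eq_pointwise hw
      have hn' : Tendsto (fun k => n k) l atTop := (hn.tendsto_atTop).mono_left inf_le_left
      have hdiff := avg_diff_tendsto f hf (y p₀.1) (y p₀.2) n l hagree hn'
      have hsub := h1.sub h2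
      have huni := tendsto_nhds_unique hsub hdiff
      exact sub_eq_zero.mp huni
    have hμ1 : (μs p₀.1) Set.univ = 1 := generic_measure_univ_one (hzG p₀.1)
    have hμ2 : (μs p₀.2) Set.univ = 1 := generic_measure_univ_one (hzG p₀.2)
    exact hne12 (hinj (measure_ext_of_integrals hμ1 hμ2 hint))
end

section
/- Let x ∈ {0,1}^Z be generic for an ergodic measure μ ≠ δ_{0^∞}, with orbit closure X having {0^∞} as its unique minimal subsystem, and suppose there is a strictly increasing sequence (n_k) such that 0^{n_k} is the unique right-special word of length n_k in X for every k. Then this situation is contradictory: no such sequence (n_k) exists, provided additionally c_X(n) < Kn for all n for some constant K. -/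
open Filter Topology MeasureTheory

variable {A : Type*} {B : Type*}

section Aux

local notation "Pt" => (ℤ → Fin 2)

/-- position `s` starts a run of `N` zeros in `x`. -/
def runStart (x : Pt) (N : ℕ) (s : ℤ) : Prop := ∀ i : ℕ, i < N → x (s + i) = 0

/-- number of ones of `x` in `[a, b)`. -/
noncomputable def ones (x : Pt) (a b : ℤ) : ℕ := ((Finset.Ico a b).filter (fun i => x i = 1)).card

lemma fin2_eq_one_of_ne {v : Fin 2} (h : v ≠ 0) : v = 1 := by omega

lemma wordAt_length_s19 (x : Pt) (p : ℤ) (ℓ : ℕ) : (wordAt x p ℓ).length = ℓ := by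
  simp [wordAt]

lemma wordAt_eq_iff_s19 {x : Pt} {p q : ℤ} {ℓ : ℕ} :
    wordAt x p ℓ = wordAt x q ℓ ↔ ∀ s : ℕ, s < ℓ → x (p + s) = x (q + s) := by
  rw [wordAt, wordAt, List.ofFn_inj]
  constructor
  · intro h s hs
    exact congrFun h ⟨s, hs⟩
  · intro h
    funext t
    exact h t.val t.isLt

lemma wordAt_eq_replicate_iff {x : Pt} {p : ℤ} {ℓ : ℕ} :
    wordAt x p ℓ = List.replicate ℓ (0 : Fin 2) ↔ ∀ s : ℕ, s < ℓ → x (p + s) = 0 := by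
  rw [List.eq_replicate_iff]
  constructor
  · intro ⟨_, h⟩ s hs
    apply h
    rw [wordAt]
    exact List.mem_ofFn.2 ⟨⟨s, hs⟩, rfl⟩
  · intro h
    refine ⟨wordAt_length_s19 x p ℓ, ?_⟩
    intro b hb
    rw [wordAt] at hb
    obtain ⟨t, ht⟩ := List.mem_ofFn.1 hb
    rw [← ht]
    exact h t.val t.isLt

lemma wordAt_mem_langOf {X : Set Pt} {x : Pt} (hxX : x ∈ X) (p : ℤ) (ℓ : ℕ) :
    wordAt x p ℓ ∈ langOf X ℓ := by
  refine ⟨wordAt_length_s19 x p ℓ, x, hxX, p, ?_⟩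
  intro k
  show x (p + _) = (List.ofFn _).get k
  obtain ⟨k, hk⟩ := k
  simp [wordAt]

lemma wordAt_succ (x : Pt) (p : ℤ) (N : ℕ) :
    wordAt x p (N + 1) = wordAt x p N ++ [x (p + N)] := by
  rw [wordAt, List.ofFn_succ', List.concat_eq_append, wordAt]
  congr 1

lemma langOf_finite (X : Set Pt) (N : ℕ) : (langOf X N).Finite := by
  apply Set.Finite.subset (Set.finite_range (fun f : Fin N → Fin 2 => List.ofFn f))
  intro w hw
  have hlen : w.length = N := hw.1
  subst hlen
  exact ⟨w.get, List.ofFn_get w⟩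

/-- unique right extension for non-zero words of an `hrs` length. -/
lemma next_det {X : Set Pt} {N : ℕ}
    (hrsN : RS X N = {List.replicate N (0 : Fin 2)})
    {w : List (Fin 2)} (hw : w.length = N) (hww : w ≠ List.replicate N (0 : Fin 2))
    {a b : Fin 2} (ha : WordIn X (w ++ [a])) (hb : WordIn X (w ++ [b])) : a = b := by
  by_contra hab
  apply hww
  have : w ∈ RS X N := ⟨hw, a, b, hab, ha, hb⟩
  rw [hrsN] at this
  exact this

end Aux
section Aux2

/-- Synchronization: equal windows propagate forward while no reset occurs. -/
lemma sync {X : Set (ℤ → Fin 2)} {x : ℤ → Fin 2} (hxX : x ∈ X) {N : ℕ}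
    (hrsN : RS X N = {List.replicate N (0 : Fin 2)})
    {p q : ℤ}
    (hpq : wordAt x (p - N) N = wordAt x (q - N) N)
    (t : ℕ) (hno : ∀ j : ℤ, q - N ≤ j → j < q - N + t → ¬ runStart x N j) :
    ∀ s : ℕ, s < N + t → x (p - N + s) = x (q - N + s) := by
  induction t with
  | zero =>
    intro s hs
    exact wordAt_eq_iff_s19.1 hpq s (by omega)
  | succ t ih =>
    have ih' := ih (fun j h1 h2 => hno j h1 (by omega))
    intro s hs
    by_cases hsN : s < N + t
    · exact ih' s hsN
    have hseq : s = N + t := by omega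
    subst hseq
    have hveq : wordAt x (p - N + t) N = wordAt x (q - N + t) N := by
      rw [wordAt_eq_iff_s19]
      intro s' hs'
      have e1 : p - N + (t : ℤ) + (s' : ℤ) = p - N + ((t + s' : ℕ) : ℤ) := by
        push_cast; ring
      have e2 : q - N + (t : ℤ) + (s' : ℤ) = q - N + ((t + s' : ℕ) : ℤ) := by
        push_cast; ring
      rw [e1, e2]
      exact ih' (t + s') (by omega)
    have hvne : wordAt x (q - N + t) N ≠ List.replicate N (0 : Fin 2) := by
      intro hrep
      exact hno (q - N + t) (by omega) (by omega)
        (fun i hi => wordAt_eq_replicate_iff.1 hrep i hi)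
    have hwp : WordIn X (wordAt x (q - N + t) N ++ [x (p - N + t + N)]) := by
      rw [← hveq, ← wordAt_succ]
      exact (wordAt_mem_langOf hxX _ _).2
    have hwq : WordIn X (wordAt x (q - N + t) N ++ [x (q - N + t + N)]) := by
      rw [← wordAt_succ]
      exact (wordAt_mem_langOf hxX _ _).2
    have hnext := next_det hrsN (wordAt_length_s19 x _ N) hvne hwp hwq
    have h1 : p - N + ((N + t : ℕ) : ℤ) = p - N + t + N := by push_cast; ring
    have h2 : q - N + ((N + t : ℕ) : ℤ) = q - N + t + N := by push_cast; ring
    rw [h1, h2]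
    exact hnext

/-- An interval containing no `N`-run has length at most `(K+2)N`. -/
lemma no_run_short {X : Set (ℤ → Fin 2)} {x : ℤ → Fin 2} (hxX : x ∈ X) {N K : ℕ}
    (hN : 1 ≤ N) (hrsN : RS X N = {List.replicate N (0 : Fin 2)})
    (hcomp : complexity X N < K * N)
    (hF1 : ∀ M : ℤ, ∃ s, M ≤ s ∧ runStart x N s)
    {a b : ℤ}
    (hnorun : ∀ s : ℤ, a ≤ s → s + N ≤ b → ¬ runStart x N s) :
    b - a ≤ (K + 2) * N := by
  by_contra hlen
  push_neg at hlen
  have hinj : ∀ p q : ℤ, a + 2*N ≤ p → p < q → q < b →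
      wordAt x (p - N) N ≠ wordAt x (q - N) N := by
    intro p q hp hpq hqb heq
    obtain ⟨u, ⟨huq, hurun⟩, hleast⟩ := Int.exists_least_of_bdd
      (P := fun z => q - N ≤ z ∧ runStart x N z)
      ⟨q - N, fun z hz => hz.1⟩
      (by obtain ⟨s, hs1, hs2⟩ := hF1 (q - N); exact ⟨s, hs1, hs2⟩)
    set t := (u - (q - N)).toNat with ht
    have htz : (t : ℤ) = u - (q - N) := Int.toNat_of_nonneg (by omega)
    have hsync := sync hxX hrsN heq t (by
      intro j h1 h2 hr
      have := hleast j ⟨h1, hr⟩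
      omega)
    set d := q - p with hd
    have hdpos : 0 < d := by omega
    have hrun2 : runStart x N (u - d) := by
      intro i hi
      have h1 : q - N + ((t + i : ℕ) : ℤ) = u + i := by push_cast; omega
      have h2 : p - N + ((t + i : ℕ) : ℤ) = u - d + i := by push_cast; omega
      have hs := hsync (t + i) (by omega)
      rw [h1, h2] at hs
      rw [hs]
      exact hurun i hi
    by_cases hcase : q - N ≤ u - d
    · have := hleast (u - d) ⟨hcase, hrun2⟩
      omega
    · exact hnorun (u - d) (by omega) (by omega) hrun2
  -- counting
  have hfin := langOf_finite X N
  set S : Finset ℤ := Finset.Ico (a + 2*N) b with hS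
  have hcard : S.card = (b - (a + 2*N)).toNat := Int.card_Ico _ _
  have himage : (fun p => wordAt x (p - N) N) '' (S : Set ℤ) ⊆ langOf X N := by
    rintro w ⟨p, hp, rfl⟩
    exact wordAt_mem_langOf hxX _ _
  have hinjon : Set.InjOn (fun p => wordAt x (p - N) N) (S : Set ℤ) := by
    intro p hp q hq heq'
    simp only [hS, Finset.coe_Ico, Set.mem_Ico] at hp hq
    by_contra hne
    rcases lt_or_gt_of_ne hne with h | h
    · exact hinj p q hp.1 h hq.2 heq'
    · exact hinj q p hq.1 h hp.2 heq'.symm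
  have h1 : (S : Set ℤ).ncard ≤ (langOf X N).ncard := by
    rw [← Set.ncard_image_of_injOn hinjon]
    exact Set.ncard_le_ncard himage hfin
  rw [Set.ncard_coe_finset S] at h1
  have h2 : complexity X N = (langOf X N).ncard := rfl
  have h4 : ((K : ℤ) + 2) * (N : ℤ) = ((K * N : ℕ) : ℤ) + 2 * (N : ℤ) := by
    push_cast; ring
  omega

end Aux2
section Aux3

lemma orbitClosure_subset {X : Set (ℤ → Fin 2)} (hX : IsSubshift X)
    {x : ℤ → Fin 2} (hxX : x ∈ X) : orbitClosure x ⊆ X := by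
  apply closure_minimal _ hX.1
  rintro y ⟨m, rfl⟩
  exact hX.2 m x hxX

/-- Forward runs of zeros of any scale with a unique-RS length occur beyond any point. -/
lemma runs_exist {X : Set (ℤ → Fin 2)} (hX : IsSubshift X)
    (hmin : ∀ M : Set (ℤ → Fin 2), MinimalSubsystem X M ↔ M = {fun _ => (0 : Fin 2)})
    {x : ℤ → Fin 2} (hxX : x ∈ X) {N : ℕ} (hN : 1 ≤ N)
    (hrsN : RS X N = {List.replicate N (0 : Fin 2)}) :
    ∀ M : ℤ, ∃ s, M ≤ s ∧ runStart x N s := by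
  intro M
  by_contra hcon
  push_neg at hcon
  -- pigeonhole: two equal windows
  haveI := (langOf_finite X N).to_subtype
  obtain ⟨m0, m1, hne, heq⟩ := Finite.exists_ne_map_eq_of_infinite
      (fun m : ℕ => (⟨wordAt x (M + m) N, wordAt_mem_langOf hxX _ _⟩ : langOf X N))
  have key : ∀ m m' : ℕ, m < m' → wordAt x (M + m) N = wordAt x (M + m') N → False := by
    intro m m' hlt heqw
    set P : ℤ := M + m with hP
    set d : ℤ := (m' : ℤ) - m with hd
    have hdpos : 0 < d := by omega
    have hpq : wordAt x ((P + N) - N) N = wordAt x ((P + d + N) - N) N := by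
      have e1 : (P + N) - N = M + m := by ring
      have e2 : (P + d + N) - N = M + m' := by omega
      rw [e1, e2]; exact heqw
    have hsyncall : ∀ s : ℕ, x (P + s) = x (P + s + d) := by
      intro s
      have hs := sync hxX hrsN hpq (s + 1) (by
        intro j h1 h2 hr
        exact hcon j (by omega) hr) s (by omega)
      have e1 : P + N - N + (s : ℤ) = P + s := by ring
      have e2 : P + d + N - N + (s : ℤ) = P + s + d := by ring
      rw [e1, e2] at hs
      exact hs
    -- periodicity to the right
    have hper2 : ∀ k : ℕ, ∀ s : ℤ, s.toNat = k → 0 ≤ s → x (P + s) = x (P + s % d) := by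
      intro k
      induction k using Nat.strong_induction_on with
      | _ k ih =>
        intro s hk hs
        by_cases hsd : s < d
        · rw [Int.emod_eq_of_lt hs hsd]
        · push_neg at hsd
          have h1 : x (P + (s - d)) = x (P + s) := by
            have := hsyncall (s - d).toNat
            rw [Int.toNat_of_nonneg (by omega)] at this
            have e : P + (s - d) + d = P + s := by ring
            rw [e] at this
            exact this
          have h2 := ih (s - d).toNat (by omega) (s - d) rfl (by omega)
          rw [← h1, h2, Int.sub_emod_right]
    have hper : ∀ s : ℤ, 0 ≤ s → x (P + s) = x (P + s % d) :=
      fun s hs => hper2 s.toNat s rfl hs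
    -- the periodic point z
    set z : ℤ → Fin 2 := fun i => x (P + i % d) with hz
    have hzlim : Filter.Tendsto (fun j : ℕ => shiftBy (P + j * d) x) Filter.atTop (𝓝 z) := by
      rw [tendsto_pi_nhds]
      intro i
      apply Filter.Tendsto.congr' _ tendsto_const_nhds
      filter_upwards [Filter.eventually_ge_atTop (-i).toNat] with j hj
      have h0 : (0 : ℤ) ≤ i + j * d := by
        have : (j : ℤ) ≤ j * d := le_mul_of_one_le_right (by positivity) hdpos
        omega
      have e1 : shiftBy (P + j * d) x i = x (P + (i + j * d)) := by
        simp [shiftBy]; ring_nf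
      rw [e1, hper (i + j * d) h0, Int.add_mul_emod_self_right]
    have hzX : z ∈ X := by
      apply orbitClosure_subset hX hxX
      exact mem_closure_of_tendsto hzlim
        (Filter.Eventually.of_forall fun j => ⟨P + j * d, rfl⟩)
    -- z has a one
    have hz1 : ∃ i : ℤ, z i = 1 := by
      by_contra h0
      push_neg at h0
      apply hcon P (by omega)
      intro i hi
      have : x (P + i) = z i := by
        rw [hz]
        exact hper i (by positivity)
      rw [this]
      have := h0 (i : ℤ)
      omega
    obtain ⟨i0, hi0⟩ := hz1
    -- the orbit of z is a minimal subsystem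
    have hzper : ∀ i k : ℤ, z (i + k) = z (i + k % d) := by
      intro i k
      show x (P + (i + k) % d) = x (P + (i + k % d) % d)
      rw [Int.add_emod i (k % d), Int.emod_emod_of_dvd k (dvd_refl d), ← Int.add_emod]
    set Mz : Set (ℤ → Fin 2) := {y | ∃ k : ℤ, y = shiftBy k z} with hMz
    have hshift_mod : ∀ k : ℤ, shiftBy k z = shiftBy (k % d) z := by
      intro k
      funext i
      show z (i + k) = z (i + k % d)
      exact hzper i k
    have hmzmin : MinimalSubsystem X Mz := by
      refine ⟨?_, ⟨z, 0, by funext i; simp [shiftBy]⟩, ?_, ?_, ?_⟩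
      · rintro y ⟨k, rfl⟩
        exact hX.2 k z hzX
      · apply Set.Finite.isClosed
        apply Set.Finite.subset (Set.Finite.image (fun k => shiftBy k z) (Set.finite_Ico 0 d))
        rintro y ⟨k, rfl⟩
        refine ⟨k % d, ?_, (hshift_mod k).symm⟩
        exact Set.mem_Ico.2 ⟨Int.emod_nonneg k (by omega), Int.emod_lt_of_pos k hdpos⟩
      · rintro mm y ⟨k, rfl⟩
        refine ⟨k + mm, ?_⟩
        funext i
        show z (i + mm + k) = z (i + (k + mm))
        congr 1; ring
      · rintro M' hsub ⟨y0, hy0⟩ _ hinv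
        obtain ⟨k, rfl⟩ := hsub hy0
        apply Set.Subset.antisymm hsub
        rintro y ⟨k', rfl⟩
        have : shiftBy (k' - k) (shiftBy k z) = shiftBy k' z := by
          funext i
          show z (i + (k' - k) + k) = z (i + k')
          congr 1; ring
        rw [← this]
        exact hinv (k' - k) _ hy0
    have hMzeq := (hmin Mz).1 hmzmin
    have hzmem : z ∈ Mz := ⟨0, by funext i; simp [shiftBy]⟩
    rw [hMzeq] at hzmem
    have : z i0 = 0 := congrFun hzmem i0
    rw [hi0] at this
    exact absurd this (by decide)
  rcases lt_or_gt_of_ne hne with h | h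
  · exact key m0 m1 h (by simpa using congrArg Subtype.val heq)
  · exact key m1 m0 h (by simpa using (congrArg Subtype.val heq).symm)

end Aux3
section Aux4

lemma ones_le (x : ℤ → Fin 2) (a b : ℤ) : ones x a b ≤ (b - a).toNat := by
  rw [ones, ← Int.card_Ico a b]
  exact Finset.card_filter_le _ _

lemma ones_split (x : ℤ → Fin 2) {a c b : ℤ} (h1 : a ≤ c) (h2 : c ≤ b) :
    ones x a b = ones x a c + ones x c b := by
  rw [ones, ones, ones, ← Finset.card_union_of_disjoint
    (Finset.disjoint_filter_filter (Finset.Ico_disjoint_Ico_consecutive a c b)),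
    ← Finset.filter_union, Finset.Ico_union_Ico_eq_Ico h1 h2]

lemma ones_run_zero {x : ℤ → Fin 2} {N : ℕ} {s : ℤ} (h : runStart x N s) :
    ones x s (s + N) = 0 := by
  rw [ones, Finset.card_eq_zero, Finset.filter_eq_empty_iff]
  intro i hi
  rw [Finset.mem_Ico] at hi
  have he : s + ((i - s).toNat : ℤ) = i := by omega
  have h0 : x i = 0 := by rw [← he]; exact h (i - s).toNat (by omega)
  rw [h0]
  decide

lemma decay {X : Set (ℤ → Fin 2)} (hX : IsSubshift X)
    (hmin : ∀ M : Set (ℤ → Fin 2), MinimalSubsystem X M ↔ M = {fun _ => (0 : Fin 2)})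
    {x : ℤ → Fin 2} (hxX : x ∈ X) {n : ℕ → ℕ} (hn : StrictMono n)
    (hrs : ∀ k, RS X (n k) = {List.replicate (n k) (0 : Fin 2)})
    {K : ℕ} (hK : ∀ m : ℕ, 1 ≤ m → complexity X m < K * m) (t : ℕ) :
    ∃ Nt : ℕ, (1 ≤ Nt) ∧ (∃ k, Nt = n k) ∧
      ∀ a b : ℤ, a ≤ b → runStart x Nt b →
        (2*K+6)^t * ones x a b ≤ (2*K+5)^t * ((b - a).toNat + Nt) := by
  induction t with
  | zero =>
    refine ⟨n 1, ?_, ⟨1, rfl⟩, fun a b hab hb => ?_⟩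
    · have := hn (show 0 < 1 by norm_num)
      omega
    · simpa using le_trans (ones_le x a b) (Nat.le_add_right _ _)
  | succ t ih =>
    obtain ⟨N0, hN0, ⟨k0, hk0⟩, hclaim⟩ := ih
    set N1 := n (2 * N0) with hN1def
    have h2N : 2 * N0 ≤ N1 := hn.le_apply
    have hN1 : 1 ≤ N1 := by omega
    have hrsN1 : RS X N1 = {List.replicate N1 (0 : Fin 2)} := hrs (2 * N0)
    have hF1 := runs_exist hX hmin hxX hN1 hrsN1
    have hcompN1 := hK N1 hN1
    refine ⟨N1, hN1, ⟨2 * N0, rfl⟩, ?_⟩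
    suffices H : ∀ L : ℕ, ∀ a b : ℤ, (b - a).toNat ≤ L → a ≤ b → runStart x N1 b →
        (2*K+6)^(t+1) * ones x a b ≤ (2*K+5)^(t+1) * ((b - a).toNat + N1) by
      exact fun a b hab hb => H (b - a).toNat a b le_rfl hab hb
    intro L
    induction L using Nat.strong_induction_on with
    | _ L ihL =>
      intro a b hL hab hb
      by_cases hex : ∃ s : ℤ, a ≤ s ∧ s + N1 ≤ b ∧ runStart x N1 s
      · obtain ⟨s, has, hsb, hsrun⟩ := hex
        have hones : ones x a b = ones x a s + ones x (s + N1) b := by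
          rw [ones_split x has (by omega), ones_split x (show s ≤ s + N1 by omega) hsb,
            ones_run_zero hsrun]
          omega
        have hL1 : 1 ≤ L := by
          have : (N1 : ℤ) ≤ b - a := by omega
          omega
        have ih1 := ihL (s - a).toNat (by omega) a s (le_rfl) has hsrun
        have ih2 := ihL (b - (s + N1)).toNat (by omega) (s + N1) b le_rfl (by omega) hb
        calc (2*K+6)^(t+1) * ones x a b
            = (2*K+6)^(t+1) * ones x a s + (2*K+6)^(t+1) * ones x (s + N1) b := by
              rw [hones, Nat.mul_add]
          _ ≤ (2*K+5)^(t+1) * ((s - a).toNat + N1)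
              + (2*K+5)^(t+1) * ((b - (s + N1)).toNat + N1) := Nat.add_le_add ih1 ih2
          _ = (2*K+5)^(t+1) * ((b - a).toNat + N1) := by
              rw [← Nat.mul_add]
              congr 1
              omega
      · push_neg at hex
        have hshort := no_run_short hxX hN1 hrsN1 hcompN1 hF1
          (fun s h1 h2 => hex s h1 h2)
        have hcast : ((((K+2) * N1 : ℕ)) : ℤ) = ((K : ℤ) + 2) * (N1 : ℤ) := by
          push_cast; ring
        have e1 : (b - a).toNat ≤ (K + 2) * N1 := by omega
        have hbrun0 : runStart x N0 b := fun i hi => hb i (by omega)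
        have hbase := hclaim a b hab hbrun0
        set L' := (b - a).toNat with hL'
        have e2 : (2*K+6) * ((b - a).toNat + N0) ≤ (2*K+5) * (L' + N1) := by
          have e3 : (2*K+6) * N0 ≤ (K+3) * N1 := by
            calc (2*K+6) * N0 = (K+3) * (2*N0) := by ring
              _ ≤ (K+3) * N1 := Nat.mul_le_mul_left _ h2N
          calc (2*K+6) * (L' + N0) = (2*K+5) * L' + (L' + (2*K+6) * N0) := by ring
            _ ≤ (2*K+5) * L' + ((K+2) * N1 + (K+3) * N1) :=
                Nat.add_le_add_left (Nat.add_le_add e1 e3) _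
            _ = (2*K+5) * (L' + N1) := by ring
        calc (2*K+6)^(t+1) * ones x a b
            = (2*K+6) * ((2*K+6)^t * ones x a b) := by ring
          _ ≤ (2*K+6) * ((2*K+5)^t * ((b - a).toNat + N0)) :=
              Nat.mul_le_mul_left _ hbase
          _ = (2*K+5)^t * ((2*K+6) * ((b - a).toNat + N0)) := by ring
          _ ≤ (2*K+5)^t * ((2*K+5) * (L' + N1)) := Nat.mul_le_mul_left _ e2
          _ = (2*K+5)^(t+1) * (L' + N1) := by ring

end Aux4
section Aux5

open MeasureTheory

lemma eq_dirac_of_compl_null {μ : Measure (ℤ → Fin 2)} [IsProbabilityMeasure μ]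
    {z : ℤ → Fin 2} (h : μ ({z}ᶜ) = 0) : μ = Measure.dirac z := by
  have hz1 : μ {z} = 1 := by
    have := measure_add_measure_compl (μ := μ) (s := {z}) (measurableSet_singleton z)
    rw [h, measure_univ, add_zero] at this
    exact this
  ext s hs
  rw [Measure.dirac_apply' z hs]
  by_cases hzs : z ∈ s
  · have h1 : μ (s ∩ {z}) = 1 := by
      rw [Set.inter_eq_right.2 (Set.singleton_subset_iff.2 hzs)]
      exact hz1
    have h2 : μ (s \ {z}) = 0 :=
      measure_mono_null (Set.diff_subset_compl s {z}) h
    have := measure_inter_add_diff (μ := μ) s (measurableSet_singleton z)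
    rw [h1, h2] at this
    rw [← this]
    simp [Set.indicator_of_mem hzs]
  · have h2 : μ s = 0 := by
      apply measure_mono_null _ h
      intro y hy
      simp only [Set.mem_compl_iff, Set.mem_singleton_iff]
      rintro rfl
      exact hzs hy
    rw [h2]
    simp [Set.indicator_of_notMem hzs]

lemma alpha_pos {μ : Measure (ℤ → Fin 2)} [IsProbabilityMeasure μ]
    (herg : Ergodic (shiftBy 1) μ)
    (hμne : μ ≠ Measure.dirac (fun _ => (0 : Fin 2))) :
    0 < ∫ y, ((y 0 : Fin 2).val : ℝ) ∂μ := by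
  set f : (ℤ → Fin 2) → ℝ := fun y => ((y 0).val : ℝ) with hf
  have hcont : Continuous f := by
    have h1 : Continuous (fun y : ℤ → Fin 2 => y 0) := continuous_apply 0
    exact (continuous_of_discreteTopology (f := fun v : Fin 2 => ((v.val : ℕ) : ℝ))).comp h1
  have hnonneg : ∀ y, 0 ≤ f y := fun y => by positivity
  have hint : Integrable f μ := by
    refine (integrable_const (1 : ℝ)).mono' hcont.aestronglyMeasurable ?_
    filter_upwards with y
    rw [Real.norm_eq_abs, abs_of_nonneg (hnonneg y)]
    have := (y 0).isLt
    have h2 : (y 0).val ≤ 1 := by omega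
    show ((y 0).val : ℝ) ≤ 1
    exact_mod_cast h2
  rcases lt_or_eq_of_le (integral_nonneg (f := f) hnonneg) with h | h
  · exact h
  exfalso
  have hzero : f =ᵐ[μ] 0 := (integral_eq_zero_iff_of_nonneg hnonneg hint).1 h.symm
  set A : ℤ → Set (ℤ → Fin 2) := fun i => {y | y i = 1} with hA
  have hAmeas : ∀ i, MeasurableSet (A i) :=
    fun i => (measurable_pi_apply i) (measurableSet_singleton 1)
  have hA0 : μ (A 0) = 0 := by
    have hnull : μ {y | f y ≠ 0} = 0 := by
      have := hzero
      rw [Filter.EventuallyEq, ae_iff] at this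
      simpa using this
    apply measure_mono_null _ hnull
    intro y hy
    have hy1 : y 0 = 1 := hy
    simp only [Set.mem_setOf_eq]
    rw [hf]
    simp [hy1]
  have hstep : ∀ i : ℤ, μ (A (i + 1)) = μ (A i) := by
    intro i
    have hpre : shiftBy 1 ⁻¹' (A i) = A (i + 1) := by
      ext y
      simp [hA, shiftBy]
    rw [← hpre]
    exact herg.toMeasurePreserving.measure_preimage (hAmeas i).nullMeasurableSet
  have hall : ∀ i : ℤ, μ (A i) = 0 := by
    intro i
    induction i using Int.induction_on with
    | zero => exact hA0
    | succ i ih => rw [hstep i]; exact ih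
    | pred i ih =>
      have := hstep (-(i : ℤ) - 1)
      simp only [sub_add_cancel] at this
      rw [← this]
      exact ih
  have hcompl : μ ({(fun _ => (0 : Fin 2))}ᶜ) = 0 := by
    apply measure_mono_null _ (measure_iUnion_null hall)
    intro y hy
    simp only [Set.mem_compl_iff, Set.mem_singleton_iff] at hy
    have : ∃ i : ℤ, y i ≠ 0 := by
      by_contra hno
      push_neg at hno
      exact hy (funext hno)
    obtain ⟨i, hi⟩ := this
    exact Set.mem_iUnion.2 ⟨i, fin2_eq_one_of_ne hi⟩
  exact hμne (eq_dirac_of_compl_null hcompl)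

end Aux5
section Aux6

lemma ones_single (x : ℤ → Fin 2) (c : ℤ) :
    ones x c (c + 1) = if x c = 1 then 1 else 0 := by
  rw [ones]
  have h1 : Finset.Ico c (c + 1) = {c} := by
    ext i
    simp only [Finset.mem_Ico, Finset.mem_singleton]
    omega
  rw [h1, Finset.filter_singleton]
  split_ifs <;> simp

lemma sum_ones (x : ℤ → Fin 2) (N : ℕ) :
    (∑ i ∈ Finset.range N, ((x (i : ℤ)).val : ℝ)) = (ones x 0 N : ℝ) := by
  induction N with
  | zero => simp [ones]
  | succ N ih =>
    rw [Finset.sum_range_succ, ih]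
    have e : ((N + 1 : ℕ) : ℤ) = (N : ℤ) + 1 := by push_cast; ring
    rw [e, ones_split x (a := 0) (c := (N : ℤ)) (b := (N : ℤ) + 1)
      (by positivity) (by omega), ones_single]
    rcases (show x (N : ℤ) = 0 ∨ x (N : ℤ) = 1 by omega) with h | h <;>
      simp [h]

end Aux6
theorem stmt19 (X : Set (ℤ → Fin 2)) (hX : IsSubshift X)
    (x0 : ℤ → Fin 2) (hx0 : X = orbitClosure x0)
    (hmin : ∀ M : Set (ℤ → Fin 2), MinimalSubsystem X M ↔ M = {fun _ => 0})
    (μ : Measure (ℤ → Fin 2)) [IsProbabilityMeasure μ]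
    (herg : Ergodic (shiftBy 1) μ) (hμX : μ X = 1)
    (hμne : μ ≠ Measure.dirac (fun _ => 0))
    (x : ℤ → Fin 2) (hxX : x ∈ X) (hgen : GenericFor x μ)
    (n : ℕ → ℕ) (hn : StrictMono n)
    (hrs : ∀ k, RS X (n k) = {List.replicate (n k) (0 : Fin 2)})
    (K : ℕ) (hK : ∀ m : ℕ, 1 ≤ m → complexity X m < K * m) :
    False := by
  classical
  set f : (ℤ → Fin 2) → ℝ := fun y => ((y 0).val : ℝ) with hf
  have hcont : Continuous f := by
    have h1 : Continuous (fun y : ℤ → Fin 2 => y 0) := continuous_apply 0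
    exact (continuous_of_discreteTopology
      (f := fun v : Fin 2 => ((v.val : ℕ) : ℝ))).comp h1
  set α := ∫ y, f y ∂μ with hα
  have hαpos : 0 < α := alpha_pos herg hμne
  have htend := hgen f hcont
  have htendones : Filter.Tendsto (fun N : ℕ => (ones x 0 N : ℝ) / N)
      Filter.atTop (𝓝 α) := by
    apply htend.congr
    intro N
    congr 1
    rw [← sum_ones x N]
    apply Finset.sum_congr rfl
    intro i _
    simp [hf, shiftBy]
  set θ : ℝ := (2*(K:ℝ)+5) / (2*(K:ℝ)+6) with hθ
  have hθ0 : 0 ≤ θ := by positivity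
  have hθ1 : θ < 1 := by
    rw [hθ, div_lt_one (by positivity)]
    linarith
  obtain ⟨t, hθt⟩ := exists_pow_lt_of_lt_one hαpos hθ1
  obtain ⟨Nt, hNt1, ⟨kt, hkt⟩, hclaim⟩ := decay hX hmin hxX hn hrs hK t
  have hrsNt : RS X Nt = {List.replicate Nt (0 : Fin 2)} := by rw [hkt]; exact hrs kt
  have hF1 := runs_exist hX hmin hxX hNt1 hrsNt
  set β : ℝ := (θ^t + α)/2 with hβ
  have hθβ : θ^t < β := by rw [hβ]; linarith
  have hβα : β < α := by rw [hβ]; linarith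
  have hev := htendones.eventually (eventually_gt_nhds hβα)
  obtain ⟨M₀, hM₀⟩ := Filter.eventually_atTop.1 hev
  set V : ℕ := ⌈(Nt : ℝ) / (β - θ^t)⌉₊ + 1 with hV
  obtain ⟨s, hsge, hsrun⟩ := hF1 ((max M₀ V : ℕ) + 1)
  set v : ℕ := s.toNat with hv
  have hsv : (v : ℤ) = s := Int.toNat_of_nonneg (by omega)
  have hvge : max M₀ V + 1 ≤ v := by omega
  have hcount := hclaim 0 s (by omega) hsrun
  rw [sub_zero] at hcount
  have hcastR : ((2*(K:ℝ))+6)^t * (ones x 0 s : ℝ)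
      ≤ ((2*(K:ℝ))+5)^t * ((v : ℝ) + (Nt : ℝ)) := by
    have := (Nat.cast_le (α := ℝ)).2 hcount
    push_cast at this
    convert this using 2 <;> ring
  have hone_le : (ones x 0 s : ℝ) ≤ θ^t * ((v : ℝ) + Nt) := by
    rw [hθ, div_pow, div_mul_eq_mul_div, le_div_iff₀ (by positivity)]
    calc (ones x 0 s : ℝ) * (2*(K:ℝ)+6)^t
        = ((2*(K:ℝ))+6)^t * (ones x 0 s : ℝ) := by ring
      _ ≤ ((2*(K:ℝ))+5)^t * ((v : ℝ) + (Nt : ℝ)) := hcastR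
      _ = (2*(K:ℝ)+5)^t * ((v : ℝ) + (Nt : ℝ)) := by ring
  have hM := hM₀ v (by omega)
  rw [hsv] at hM
  have hvpos : (0 : ℝ) < v := by
    have : 1 ≤ v := by omega
    exact_mod_cast this
  have hβv : β * v < (ones x 0 s : ℝ) := (lt_div_iff₀ hvpos).1 hM
  have hθt1 : θ^t ≤ 1 := pow_le_one₀ hθ0 hθ1.le
  have hNt0 : (0 : ℝ) ≤ (Nt : ℝ) := by positivity
  have h1 : (β - θ^t) * v < (Nt : ℝ) := by nlinarith
  have h2 : (Nt : ℝ) ≤ (β - θ^t) * v := by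
    have hd : (0 : ℝ) < β - θ^t := by linarith
    have hceil := Nat.le_ceil ((Nt : ℝ) / (β - θ^t))
    have hVv : ((⌈(Nt : ℝ) / (β - θ^t)⌉₊ : ℕ) : ℝ) ≤ (v : ℝ) := by
      have : (⌈(Nt : ℝ) / (β - θ^t)⌉₊ : ℕ) ≤ v := by omega
      exact_mod_cast this
    calc (Nt : ℝ) = (β - θ^t) * ((Nt : ℝ) / (β - θ^t)) := by field_simp
      _ ≤ (β - θ^t) * v := by
          apply mul_le_mul_of_nonneg_left _ hd.le
          linarith
  linarith
end
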